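/- Let L discrete random variables X₁,...,X_L be conditionally independent given Y, and let C₁,...,C_L satisfy the Markov structure where Cᵢ depends only on Xᵢ (given Y). Then I(X₁,...,X_L; C₁,...,C_L | Y) ≥ ∑ᵢ I(Xᵢ; Cᵢ | Y). -/

import Mathlib

open Finset

/-- Conditional mutual information I(A;B|Z) (in bits) of a joint pmf on Z × A × B. -/
noncomputable def condMI {Z A B : Type*} [Fintype Z] [Fintype A] [Fintype B]
    (p : Z → A → B → ℝ) : ℝ :=
  ∑ z, ∑ a, ∑ b, p z a b * Real.logb 2
    (p z a b * (∑ a', ∑ b', p z a' b') / ((∑ b', p z a b') * (∑ a', p z a' b)))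

set_option linter.unusedSectionVars false
set_option linter.unusedVariables false
set_option maxHeartbeats 1000000

private lemma aux_sum_ite_prod {α : Type*} [Fintype α] [DecidableEq α] {n : ℕ}
    (G : Fin n → α → ℝ) (i : Fin n) (a : α) (h : ∀ j, j ≠ i → ∑ t, G j t = 1) :
    ∑ x : Fin n → α, (if x i = a then ∏ j, G j (x j) else 0) = G i a := by
  have key : ∀ x : Fin n → α, (if x i = a then ∏ j, G j (x j) else 0)
      = ∏ j, (if j = i then (if x j = a then G j (x j) else 0) else G j (x j)) := by
    intro x
    by_cases hx : x i = a
    · rw [if_pos hx]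
      refine Finset.prod_congr rfl fun j _ => ?_
      split_ifs with h1 h2
      · rfl
      · exact absurd (h1 ▸ hx) h2
      · rfl
    · rw [if_neg hx]
      symm
      exact Finset.prod_eq_zero (Finset.mem_univ i) (by simp [hx])
  simp only [key]
  rw [← Fintype.prod_sum (fun (j : Fin n) (t : α) => if j = i then (if t = a then G j t else 0) else G j t)]
  rw [Finset.prod_eq_single i]
  · simp
  · intro j _ hj
    simp only [if_neg hj]
    exact h j hj
  · simp

private lemma aux_swap {α β γ δ : Type*} [Fintype α] [Fintype β] [Fintype γ] [Fintype δ]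
    (F : α → β → γ → δ → ℝ) :
    ∑ a, ∑ b, ∑ c, ∑ d, F a b c d = ∑ d, ∑ a, ∑ b, ∑ c, F a b c d :=
  calc ∑ a, ∑ b, ∑ c, ∑ d, F a b c d
      = ∑ a, ∑ b, ∑ d, ∑ c, F a b c d :=
        Finset.sum_congr rfl fun a _ => Finset.sum_congr rfl fun b _ => Finset.sum_comm
    _ = ∑ a, ∑ d, ∑ b, ∑ c, F a b c d :=
        Finset.sum_congr rfl fun a _ => Finset.sum_comm
    _ = ∑ d, ∑ a, ∑ b, ∑ c, F a b c d := Finset.sum_comm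

section Aux
variable {L : ℕ} {𝒴 𝒳 𝒞 : Type*}
    [Fintype 𝒴] [Fintype 𝒳] [Fintype 𝒞] [DecidableEq 𝒳] [DecidableEq 𝒞]
    (pY : 𝒴 → ℝ) (q : Fin L → 𝒴 → 𝒳 → ℝ) (r : Fin L → 𝒳 → 𝒞 → ℝ)

private lemma aux_pair (hq1 : ∀ i y, ∑ a, q i y a = 1) (hr1 : ∀ i a, ∑ b, r i a b = 1)
    (i : Fin L) (y : 𝒴) (a : 𝒳) (b : 𝒞) :
    ∑ x : Fin L → 𝒳, ∑ c : Fin L → 𝒞,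
      (if x i = a ∧ c i = b then ∏ j, q j y (x j) * r j (x j) (c j) else 0)
      = q i y a * r i a b := by
  have step1 : ∀ x : Fin L → 𝒳,
      (∑ c : Fin L → 𝒞, if x i = a ∧ c i = b then ∏ j, q j y (x j) * r j (x j) (c j) else 0)
      = if x i = a then (∏ j, q j y (x j)) * r i (x i) b else 0 := by
    intro x
    by_cases hx : x i = a
    · rw [if_pos hx]
      have : ∀ c : Fin L → 𝒞,
          (if x i = a ∧ c i = b then ∏ j, q j y (x j) * r j (x j) (c j) else 0)
          = (∏ j, q j y (x j)) * (if c i = b then ∏ j, r j (x j) (c j) else 0) := by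
        intro c
        rw [Finset.prod_mul_distrib]
        by_cases hc : c i = b
        · rw [if_pos ⟨hx, hc⟩, if_pos hc]
        · rw [if_neg (by tauto), if_neg hc, mul_zero]
      simp only [this, ← Finset.mul_sum]
      congr 1
      exact aux_sum_ite_prod (fun j t => r j (x j) t) i b (fun j _ => hr1 j (x j))
    · rw [if_neg hx]
      refine Finset.sum_eq_zero fun c _ => if_neg (by tauto)
  simp only [step1]
  have key : ∀ x : Fin L → 𝒳,
      (if x i = a then (∏ j, q j y (x j)) * r i (x i) b else 0)
      = (if x i = a then ∏ j, (if j = i then q j y (x j) * r j (x j) b else q j y (x j)) else 0) := by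
    intro x
    by_cases hx : x i = a
    · rw [if_pos hx, if_pos hx]
      rw [← Finset.mul_prod_erase univ (fun j => q j y (x j)) (Finset.mem_univ i),
          ← Finset.mul_prod_erase univ
            (fun j => (if j = i then q j y (x j) * r j (x j) b else q j y (x j))) (Finset.mem_univ i)]
      rw [if_pos rfl]
      rw [Finset.prod_congr rfl (fun j hj => if_neg (Finset.ne_of_mem_erase hj))]
      ring
    · rw [if_neg hx, if_neg hx]
  simp only [key]
  have := aux_sum_ite_prod (fun j t => if j = i then q j y t * r j t b else q j y t) i a
    (fun j hj => by simp only [if_neg hj]; exact hq1 j y)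
  simp only at this
  rw [this]
  simp

private lemma aux_margX (hq1 : ∀ i y, ∑ a, q i y a = 1) (y : 𝒴) (c : Fin L → 𝒞) :
    ∑ x : Fin L → 𝒳, ∏ j, q j y (x j) * r j (x j) (c j)
      = ∏ j, ∑ a, q j y a * r j a (c j) := by
  rw [← Fintype.prod_sum (fun (j : Fin L) (t : 𝒳) => q j y t * r j t (c j))]

private lemma aux_margC (hr1 : ∀ i a, ∑ b, r i a b = 1) (y : 𝒴) (x : Fin L → 𝒳) :
    ∑ c : Fin L → 𝒞, ∏ j, q j y (x j) * r j (x j) (c j)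
      = ∏ j, q j y (x j) := by
  have : ∀ c : Fin L → 𝒞, (∏ j, q j y (x j) * r j (x j) (c j))
      = (∏ j, q j y (x j)) * ∏ j, r j (x j) (c j) := fun c => Finset.prod_mul_distrib
  simp only [this, ← Finset.mul_sum]
  rw [← Fintype.prod_sum (fun (j : Fin L) (t : 𝒞) => r j (x j) t)]
  simp [hr1, mul_one]

private lemma aux_margXC (hq1 : ∀ i y, ∑ a, q i y a = 1) (hr1 : ∀ i a, ∑ b, r i a b = 1) (y : 𝒴) :
    ∑ x : Fin L → 𝒳, ∑ c : Fin L → 𝒞, ∏ j, q j y (x j) * r j (x j) (c j) = 1 := by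
  simp only [aux_margC q r hr1 y]
  rw [← Fintype.prod_sum (fun (j : Fin L) (t : 𝒳) => q j y t)]
  simp [hq1]

private lemma aux_pointwise (hpY0 : ∀ y, 0 ≤ pY y)
    (hq0 : ∀ i y a, 0 ≤ q i y a) (hr0 : ∀ i a b, 0 ≤ r i a b)
    (y : 𝒴) (x : Fin L → 𝒳) (c : Fin L → 𝒞) :
    pY y * (∏ j, q j y (x j) * r j (x j) (c j)) * Real.logb 2
      ((pY y * (∏ j, q j y (x j) * r j (x j) (c j)) * pY y) /
        ((pY y * ∏ j, q j y (x j)) * (pY y * ∏ j, ∑ a, q j y a * r j a (c j))))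
    = ∑ i, pY y * ((∏ j, q j y (x j) * r j (x j) (c j)) *
        Real.logb 2 (r i (x i) (c i) / ∑ a, q i y a * r i a (c i))) := by
  by_cases hy : pY y = 0
  · simp [hy]
  by_cases hf : ∃ j, q j y (x j) * r j (x j) (c j) = 0
  · obtain ⟨j0, hj0⟩ := hf
    have hP : ∏ j, q j y (x j) * r j (x j) (c j) = 0 :=
      Finset.prod_eq_zero (Finset.mem_univ j0) hj0
    simp [hP]
  push_neg at hf
  have hfpos : ∀ j, 0 < q j y (x j) * r j (x j) (c j) := fun j =>
    lt_of_le_of_ne (mul_nonneg (hq0 _ _ _) (hr0 _ _ _)) (Ne.symm (hf j))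
  have hqpos : ∀ j, 0 < q j y (x j) := fun j =>
    lt_of_le_of_ne (hq0 _ _ _) (fun h => hf j (by rw [← h, zero_mul]))
  have hrpos : ∀ j, 0 < r j (x j) (c j) := fun j =>
    lt_of_le_of_ne (hr0 _ _ _) (fun h => hf j (by rw [← h, mul_zero]))
  have hmpos : ∀ j, 0 < ∑ a, q j y a * r j a (c j) := fun j =>
    lt_of_lt_of_le (hfpos j)
      (Finset.single_le_sum (fun a _ => mul_nonneg (hq0 j y a) (hr0 j a (c j))) (Finset.mem_univ (x j)))
  have hPq : 0 < ∏ j, q j y (x j) := Finset.prod_pos (fun j _ => hqpos j)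
  have hPm : 0 < ∏ j, ∑ a, q j y a * r j a (c j) := Finset.prod_pos (fun j _ => hmpos j)
  have hypos : 0 < pY y := lt_of_le_of_ne (hpY0 y) (Ne.symm hy)
  have harg : (pY y * (∏ j, q j y (x j) * r j (x j) (c j)) * pY y) /
        ((pY y * ∏ j, q j y (x j)) * (pY y * ∏ j, ∑ a, q j y a * r j a (c j)))
      = ∏ j, (r j (x j) (c j) / ∑ a, q j y a * r j a (c j)) := by
    rw [Finset.prod_div_distrib, Finset.prod_mul_distrib,
      div_eq_div_iff (by positivity) (by positivity)]
    ring
  rw [harg]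
  have hlogb : Real.logb 2 (∏ j, (r j (x j) (c j) / ∑ a, q j y a * r j a (c j)))
      = ∑ j, Real.logb 2 (r j (x j) (c j) / ∑ a, q j y a * r j a (c j)) := by
    simp only [Real.logb]
    rw [Real.log_prod (fun j _ => div_ne_zero (hrpos j).ne' (hmpos j).ne'), Finset.sum_div]
  rw [hlogb, Finset.mul_sum]
  exact Finset.sum_congr rfl fun i _ => mul_assoc _ _ _

private lemma aux_extract (hq1 : ∀ i y, ∑ a, q i y a = 1) (hr1 : ∀ i a, ∑ b, r i a b = 1)
    (i : Fin L) (y : 𝒴) (φ : 𝒳 → 𝒞 → ℝ) :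
    ∑ x : Fin L → 𝒳, ∑ c : Fin L → 𝒞,
      (∏ j, q j y (x j) * r j (x j) (c j)) * φ (x i) (c i)
    = ∑ a, ∑ b, (q i y a * r i a b) * φ a b := by
  have expand : ∀ (x : Fin L → 𝒳) (c : Fin L → 𝒞),
      (∏ j, q j y (x j) * r j (x j) (c j)) * φ (x i) (c i)
      = ∑ a, ∑ b, (if x i = a ∧ c i = b then ∏ j, q j y (x j) * r j (x j) (c j) else 0) * φ a b := by
    intro x c
    simp [ite_mul, ite_and]
  simp only [expand]
  rw [aux_swap (fun (x : Fin L → 𝒳) (c : Fin L → 𝒞) (a : 𝒳) (b : 𝒞) =>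
      (if x i = a ∧ c i = b then ∏ j, q j y (x j) * r j (x j) (c j) else 0) * φ a b)]
  rw [aux_swap (fun (b : 𝒞) (x : Fin L → 𝒳) (c : Fin L → 𝒞) (a : 𝒳) =>
      (if x i = a ∧ c i = b then ∏ j, q j y (x j) * r j (x j) (c j) else 0) * φ a b)]
  refine Finset.sum_congr rfl fun a _ => Finset.sum_congr rfl fun b _ => ?_
  simp only [← Finset.sum_mul]
  rw [aux_pair q r hq1 hr1 i y a b]

private lemma aux_condMI_small (hpY0 : ∀ y, 0 ≤ pY y)
    (hq0 : ∀ i y a, 0 ≤ q i y a) (hq1 : ∀ i y, ∑ a, q i y a = 1)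
    (hr0 : ∀ i a b, 0 ≤ r i a b) (hr1 : ∀ i a, ∑ b, r i a b = 1) (i : Fin L) :
    condMI (fun y a b => pY y * (q i y a * r i a b))
    = ∑ y, ∑ a, ∑ b, pY y * (q i y a * r i a b) *
        Real.logb 2 (r i a b / ∑ a', q i y a' * r i a' b) := by
  unfold condMI
  refine Finset.sum_congr rfl fun y _ => Finset.sum_congr rfl fun a _ =>
    Finset.sum_congr rfl fun b _ => ?_
  beta_reduce
  have h1 : (∑ b', pY y * (q i y a * r i a b')) = pY y * q i y a := by
    simp only [← Finset.mul_sum, hr1, mul_one]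
  have h2 : (∑ a', pY y * (q i y a' * r i a' b)) = pY y * ∑ a', q i y a' * r i a' b := by
    rw [← Finset.mul_sum]
  have h3 : (∑ a', ∑ b', pY y * (q i y a' * r i a' b')) = pY y := by
    simp only [← Finset.mul_sum, hr1, mul_one, hq1]
  rw [h1, h2, h3]
  by_cases hy : pY y = 0
  · simp [hy]
  by_cases hq : q i y a = 0
  · simp [hq]
  by_cases hr : r i a b = 0
  · simp [hr]
  have hm : 0 < ∑ a', q i y a' * r i a' b :=
    lt_of_lt_of_le
      (lt_of_le_of_ne (mul_nonneg (hq0 i y a) (hr0 i a b)) (Ne.symm (mul_ne_zero hq hr)))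
      (Finset.single_le_sum (fun a' _ => mul_nonneg (hq0 i y a') (hr0 i a' b)) (Finset.mem_univ a))
  congr 1
  congr 1
  have hden : (pY y * q i y a) * (pY y * ∑ a', q i y a' * r i a' b) ≠ 0 :=
    mul_ne_zero (mul_ne_zero hy hq) (mul_ne_zero hy hm.ne')
  rw [div_eq_div_iff hden hm.ne']
  ring

end Aux

/-- if X₁,...,X_L are conditionally independent given Y and each
Cᵢ depends only on Xᵢ (Markov Cᵢ − Xᵢ − (Y, rest)), i.e. the joint law
factorizes as P(y,x,c) = P(y)·∏ᵢ P(xᵢ|y)·P(cᵢ|xᵢ), then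
I(X₁,...,X_L; C₁,...,C_L | Y) ≥ ∑ᵢ I(Xᵢ; Cᵢ | Y). -/
theorem condMI_decoupling {L : ℕ} {𝒴 𝒳 𝒞 : Type*}
    [Fintype 𝒴] [Fintype 𝒳] [Fintype 𝒞] [DecidableEq 𝒳] [DecidableEq 𝒞]
    (pY : 𝒴 → ℝ) (q : Fin L → 𝒴 → 𝒳 → ℝ) (r : Fin L → 𝒳 → 𝒞 → ℝ)
    (hpY0 : ∀ y, 0 ≤ pY y) (hpY1 : ∑ y, pY y = 1)
    (hq0 : ∀ i y a, 0 ≤ q i y a) (hq1 : ∀ i y, ∑ a, q i y a = 1)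
    (hr0 : ∀ i a b, 0 ≤ r i a b) (hr1 : ∀ i a, ∑ b, r i a b = 1) :
    ∑ i, condMI (fun y (a : 𝒳) (b : 𝒞) =>
        ∑ x : Fin L → 𝒳, ∑ c : Fin L → 𝒞,
          if x i = a ∧ c i = b then
            pY y * ∏ j, q j y (x j) * r j (x j) (c j) else 0) ≤
      condMI (fun y (x : Fin L → 𝒳) (c : Fin L → 𝒞) =>
        pY y * ∏ j, q j y (x j) * r j (x j) (c j)) := by
  apply le_of_eq
  have hfun : ∀ i : Fin L,
      (fun y (a : 𝒳) (b : 𝒞) => ∑ x : Fin L → 𝒳, ∑ c : Fin L → 𝒞,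
        if x i = a ∧ c i = b then pY y * ∏ j, q j y (x j) * r j (x j) (c j) else 0)
      = fun y a b => pY y * (q i y a * r i a b) := by
    intro i
    funext y a b
    have hpull : ∀ (x : Fin L → 𝒳) (c : Fin L → 𝒞),
        (if x i = a ∧ c i = b then pY y * ∏ j, q j y (x j) * r j (x j) (c j) else 0)
        = pY y * (if x i = a ∧ c i = b then ∏ j, q j y (x j) * r j (x j) (c j) else 0) := by
      intro x c
      by_cases h : x i = a ∧ c i = b
      · rw [if_pos h, if_pos h]
      · rw [if_neg h, if_neg h, mul_zero]
    simp only [hpull, ← Finset.mul_sum]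
    rw [aux_pair q r hq1 hr1 i y a b]
  calc ∑ i, condMI (fun y (a : 𝒳) (b : 𝒞) =>
        ∑ x : Fin L → 𝒳, ∑ c : Fin L → 𝒞,
          if x i = a ∧ c i = b then pY y * ∏ j, q j y (x j) * r j (x j) (c j) else 0)
      = ∑ i, ∑ y, ∑ a, ∑ b, pY y * (q i y a * r i a b) *
          Real.logb 2 (r i a b / ∑ a', q i y a' * r i a' b) := by
        refine Finset.sum_congr rfl fun i _ => ?_
        rw [hfun i]
        exact aux_condMI_small pY q r hpY0 hq0 hq1 hr0 hr1 i
    _ = condMI (fun y (x : Fin L → 𝒳) (c : Fin L → 𝒞) =>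
        pY y * ∏ j, q j y (x j) * r j (x j) (c j)) := by
        symm
        unfold condMI
        have hMXC : ∀ y, (∑ x : Fin L → 𝒳, ∑ c : Fin L → 𝒞,
            pY y * ∏ j, q j y (x j) * r j (x j) (c j)) = pY y := by
          intro y
          simp only [← Finset.mul_sum]
          rw [aux_margXC q r hq1 hr1 y, mul_one]
        have hMC : ∀ y (x : Fin L → 𝒳), (∑ c : Fin L → 𝒞,
            pY y * ∏ j, q j y (x j) * r j (x j) (c j)) = pY y * ∏ j, q j y (x j) := by
          intro y x
          rw [← Finset.mul_sum, aux_margC q r hr1 y x]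
        have hMX : ∀ y (c : Fin L → 𝒞), (∑ x : Fin L → 𝒳,
            pY y * ∏ j, q j y (x j) * r j (x j) (c j))
            = pY y * ∏ j, ∑ a, q j y a * r j a (c j) := by
          intro y c
          rw [← Finset.mul_sum, aux_margX q r hq1 y c]
        calc (∑ y, ∑ x : Fin L → 𝒳, ∑ c : Fin L → 𝒞,
              (pY y * ∏ j, q j y (x j) * r j (x j) (c j)) * Real.logb 2
                ((pY y * ∏ j, q j y (x j) * r j (x j) (c j)) *
                  (∑ x' : Fin L → 𝒳, ∑ c' : Fin L → 𝒞, pY y * ∏ j, q j y (x' j) * r j (x' j) (c' j)) /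
                ((∑ c' : Fin L → 𝒞, pY y * ∏ j, q j y (x j) * r j (x j) (c' j)) *
                 (∑ x' : Fin L → 𝒳, pY y * ∏ j, q j y (x' j) * r j (x' j) (c j)))))
            = ∑ y, ∑ x : Fin L → 𝒳, ∑ c : Fin L → 𝒞, ∑ i,
                pY y * ((∏ j, q j y (x j) * r j (x j) (c j)) *
                  Real.logb 2 (r i (x i) (c i) / ∑ a, q i y a * r i a (c i))) := by
              refine Finset.sum_congr rfl fun y _ => Finset.sum_congr rfl fun x _ =>
                Finset.sum_congr rfl fun c _ => ?_
              rw [hMXC y, hMC y x, hMX y c]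
              exact aux_pointwise pY q r hpY0 hq0 hr0 y x c
          _ = ∑ i, ∑ y, ∑ x : Fin L → 𝒳, ∑ c : Fin L → 𝒞,
                pY y * ((∏ j, q j y (x j) * r j (x j) (c j)) *
                  Real.logb 2 (r i (x i) (c i) / ∑ a, q i y a * r i a (c i))) :=
              aux_swap _
          _ = ∑ i, ∑ y, ∑ a, ∑ b, pY y * (q i y a * r i a b) *
                Real.logb 2 (r i a b / ∑ a', q i y a' * r i a' b) := by
              refine Finset.sum_congr rfl fun i _ => Finset.sum_congr rfl fun y _ => ?_
              simp only [← Finset.mul_sum]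
              rw [aux_extract q r hq1 hr1 i y
                (fun a b => Real.logb 2 (r i a b / ∑ a', q i y a' * r i a' b))]
              rw [Finset.mul_sum]
              refine Finset.sum_congr rfl fun a _ => ?_
              rw [Finset.mul_sum]
              exact Finset.sum_congr rfl fun b _ => (mul_assoc _ _ _).symm
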